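/- Every uniformly convex normed space X of density character κ is (<κ)-φ_X-octahedral, where φ_X is the tangential modulus of convexity of X. -/

import Mathlib

open Set Metric ENNReal

universe u

/-- A set `P` in a normed space is `r`-separated if `‖x - y‖ ≥ r`
for all distinct `x, y ∈ P`. -/
def IsRSeparated {X : Type u} [NormedAddCommGroup X] (r : ℝ) (P : Set X) : Prop :=
  ∀ x ∈ P, ∀ y ∈ P, x ≠ y → r ≤ ‖x - y‖

/-- A set `P` in a normed space is `r`-dense if every point of the space is within
distance `r` of some point of `P`. -/
def IsRDense {X : Type u} [NormedAddCommGroup X] (r : ℝ) (P : Set X) : Prop :=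
  ∀ x : X, ∃ p ∈ P, ‖x - p‖ ≤ r

/-- The simultaneous packing and covering constant `γ(X)`: the infimum of all `r > 0`
for which `X` contains a set that is simultaneously `2`-separated and `r`-dense. -/
noncomputable def packingCovering (X : Type u) [NormedAddCommGroup X] : ℝ :=
  sInf {r : ℝ | 0 < r ∧ ∃ P : Set X, IsRSeparated 2 P ∧ IsRDense r P}

/-- The lattice simultaneous packing and covering constant `γ*(X)`: the infimum of all
`r > 0` for which `X` contains an additive subgroup that is simultaneously `2`-separated
and `r`-dense. -/
noncomputable def packingCoveringStar (X : Type u) [NormedAddCommGroup X] : ℝ :=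
  sInf {r : ℝ | 0 < r ∧ ∃ D : AddSubgroup X,
    IsRSeparated 2 (D : Set X) ∧ IsRDense r (D : Set X)}

/-- The Kottman constant `K(X)`: the supremum of all `r > 0` such that the closed unit
ball of `X` contains an infinite `r`-separated set. -/
noncomputable def kottman (X : Type u) [NormedAddCommGroup X] : ℝ :=
  sSup {r : ℝ | 0 < r ∧ ∃ P : Set X,
    P ⊆ closedBall (0 : X) 1 ∧ P.Infinite ∧ IsRSeparated r P}

/-- The `κ`-Kottman constant `K(X; κ)`: the supremum of all `r > 0` such that the closed
unit ball of `X` contains an `r`-separated set of cardinality `κ`. -/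
noncomputable def kottmanCard (X : Type u) [NormedAddCommGroup X] (κ : Cardinal.{u}) : ℝ :=
  sSup {r : ℝ | 0 < r ∧ ∃ P : Set X,
    P ⊆ closedBall (0 : X) 1 ∧ Cardinal.mk ↥P = κ ∧ IsRSeparated r P}

/-- The density character of a topological space: the smallest cardinality of a dense
subset. -/
noncomputable def densChar (X : Type u) [TopologicalSpace X] : Cardinal.{u} :=
  sInf {c : Cardinal.{u} | ∃ s : Set X, Dense s ∧ Cardinal.mk ↥s = c}

/-- The modulus of local uniform rotundity `δ_X(x₀, ε)` at a point `x₀`. -/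
noncomputable def lurModulus {X : Type u} [NormedAddCommGroup X] (x₀ : X) (ε : ℝ) : ℝ :=
  sInf {d : ℝ | ∃ y : X, ‖y‖ ≤ 1 ∧ ε ≤ ‖x₀ - y‖ ∧ d = 1 - ‖x₀ + y‖ / 2}

/-- `x₀` is a LUR (locally uniformly rotund) point of the unit ball of `X` if it lies on
the unit sphere and `δ_X(x₀, ε) > 0` for every `ε ∈ (0, 2]`. -/
def IsLURPoint {X : Type u} [NormedAddCommGroup X] (x₀ : X) : Prop :=
  ‖x₀‖ = 1 ∧ ∀ ε : ℝ, 0 < ε → ε ≤ 2 → 0 < lurModulus x₀ ε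

/-- The modulus of convexity `δ_X(ε)` of a normed space `X`. -/
noncomputable def convexityModulus (X : Type u) [NormedAddCommGroup X] (ε : ℝ) : ℝ :=
  sInf {d : ℝ | ∃ x y : X, ‖x‖ ≤ 1 ∧ ‖y‖ ≤ 1 ∧ ε ≤ ‖x - y‖ ∧ d = 1 - ‖x + y‖ / 2}

/-- The tangential modulus of convexity `φ_X(t)`, defined through Birkhoff-James
orthogonality: `φ_X(t) = inf {‖x + t v‖ - 1 : x, v ∈ S_X, x ⊥_BJ v}`. -/
noncomputable def tangentialModulus (X : Type u) [NormedAddCommGroup X]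
    [NormedSpace ℝ X] (t : ℝ) : ℝ :=
  sInf {d : ℝ | ∃ x v : X, ‖x‖ = 1 ∧ ‖v‖ = 1 ∧
    (∀ lam : ℝ, ‖x‖ ≤ ‖x + lam • v‖) ∧ d = ‖x + t • v‖ - 1}

/-- `φ : [0,∞) → [0,∞)` is a positive modulus: `φ(0) = 0`, `φ` is continuous at `0`,
`t ↦ φ(t)/t` is non-decreasing on `(0,∞)`, and `φ(t) > 0` for `t > 0`. -/
def IsPositiveModulus (φ : ℝ → ℝ) : Prop :=
  φ 0 = 0 ∧ Filter.Tendsto φ (nhdsWithin 0 (Set.Ici 0)) (nhds 0) ∧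
    (∀ s t : ℝ, 0 < s → s ≤ t → φ s / s ≤ φ t / t) ∧ ∀ t : ℝ, 0 < t → 0 < φ t

/-- The positive modulus `φ_p(t) = (1 + t^p)^(1/p) - 1` (real exponents). -/
noncomputable def phiP (p : ℝ) (t : ℝ) : ℝ := (1 + t ^ p) ^ (1 / p) - 1

/-- A normed space `X` is `(<κ)-octahedral` if for every `ε > 0` and every closed
subspace `Z` of `X` of density character `< κ` there is a unit vector `x` with
`‖z + λ x‖ ≥ (1 - ε)(‖z‖ + |λ|)` for all `z ∈ Z`, `λ ∈ ℝ`. -/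
def KappaOctahedral (κ : Cardinal.{u}) (X : Type u) [NormedAddCommGroup X]
    [NormedSpace ℝ X] : Prop :=
  ∀ ε : ℝ, 0 < ε → ∀ Z : Submodule ℝ X, IsClosed (Z : Set X) → densChar ↥Z < κ →
    ∃ x : X, ‖x‖ = 1 ∧ ∀ z ∈ Z, ∀ lam : ℝ, (1 - ε) * (‖z‖ + |lam|) ≤ ‖z + lam • x‖

/-- A normed space `X` is `(<κ)-φ-octahedral` if for every `ε > 0` and every closed
subspace `Z` of `X` of density character `< κ` there is a unit vector `x` with
`‖z + λ x‖ ≥ (1 - ε)(1 + φ(|λ|))` for all `z` in the unit sphere of `Z` and `λ ∈ ℝ`. -/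
def PhiOctahedral (κ : Cardinal.{u}) (φ : ℝ → ℝ) (X : Type u) [NormedAddCommGroup X]
    [NormedSpace ℝ X] : Prop :=
  ∀ ε : ℝ, 0 < ε → ∀ Z : Submodule ℝ X, IsClosed (Z : Set X) → densChar ↥Z < κ →
    ∃ x : X, ‖x‖ = 1 ∧ ∀ z ∈ Z, ‖z‖ = 1 →
      ∀ lam : ℝ, (1 - ε) * (1 + φ |lam|) ≤ ‖z + lam • x‖

section DC
variable {E : Type u} [TopologicalSpace E]

lemma densChar_exists_dense (E : Type u) [TopologicalSpace E] :
    ∃ s : Set E, Dense s ∧ Cardinal.mk ↥s = densChar E := by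
  have h : densChar E ∈ {c : Cardinal.{u} | ∃ s : Set E, Dense s ∧ Cardinal.mk ↥s = c} :=
    csInf_mem ⟨Cardinal.mk ↥(univ : Set E), univ, dense_univ, rfl⟩
  exact h

lemma densChar_le_mk_of_dense {s : Set E} (h : Dense s) : densChar E ≤ Cardinal.mk ↥s :=
  csInf_le (OrderBot.bddBelow _) ⟨s, h, rfl⟩

end DC

section NS
variable {E : Type u} [NormedAddCommGroup E] [NormedSpace ℝ E]

lemma aleph0_le_densChar {v : E} (hv : v ≠ 0) : Cardinal.aleph0 ≤ densChar E := by
  obtain ⟨s, hs, hcard⟩ := densChar_exists_dense E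
  rw [← hcard, ← Cardinal.infinite_iff]
  constructor
  intro hfin
  have hinf : Infinite E := Infinite.of_injective (fun c : ℝ => c • v) (smul_left_injective ℝ hv)
  have hsf : s.Finite := Set.finite_coe_iff.mp hfin
  have h1 : closure s = s := hsf.isClosed.closure_eq
  have h2 : (univ : Set E) = s := by rw [← hs.closure_eq, h1]
  exact Set.infinite_univ (α := E) (h2 ▸ hsf)

lemma densChar_le_of_dense_submodule {V : Submodule ℝ E} (h : Dense (V : Set E)) :
    densChar E ≤ densChar ↥V := by
  obtain ⟨D, hD, hcard⟩ := densChar_exists_dense ↥V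
  have hval : DenseRange (Subtype.val : ↥V → E) := by
    rw [denseRange_iff_closure_range, Subtype.range_coe]
    exact h.closure_eq
  have hcomp : DenseRange ((Subtype.val : ↥V → E) ∘ (Subtype.val : ↥D → ↥V)) :=
    hval.comp hD.denseRange_val continuous_subtype_val
  have hdense : Dense (Set.range ((Subtype.val : ↥V → E) ∘ (Subtype.val : ↥D → ↥V))) := hcomp
  calc densChar E ≤ Cardinal.mk ↥(Set.range ((Subtype.val : ↥V → E) ∘ (Subtype.val : ↥D → ↥V))) :=
        densChar_le_mk_of_dense hdense
    _ ≤ Cardinal.mk ↥D := Cardinal.mk_range_le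
    _ = densChar ↥V := hcard

end NS

section Span
variable {E : Type u} [NormedAddCommGroup E] [NormedSpace ℝ E]

lemma exists_dense_rational (s : Set E) :
    ∃ T : Set E, T ⊆ (Submodule.span ℝ s : Set E) ∧
      Cardinal.mk ↥T ≤ max Cardinal.aleph0 (Cardinal.mk ↥s) ∧
      (Submodule.span ℝ s : Set E) ⊆ closure T := by
  classical
  set F : List (ℚ × ↥s) → E := fun l => (l.map fun p => ((p.1 : ℝ) • (p.2 : E))).sum with hF
  refine ⟨Set.range F, ?_, ?_, ?_⟩
  · rintro _ ⟨l, rfl⟩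
    induction l with
    | nil => simp [hF]
    | cons a l ih =>
      simp only [hF, List.map_cons, List.sum_cons]
      exact (Submodule.span ℝ s).add_mem
        ((Submodule.span ℝ s).smul_mem _ (Submodule.subset_span a.2.2)) ih
  · calc Cardinal.mk ↥(Set.range F) ≤ Cardinal.mk (List (ℚ × ↥s)) := Cardinal.mk_range_le
      _ ≤ max Cardinal.aleph0 (Cardinal.mk (ℚ × ↥s)) := Cardinal.mk_list_le_max _
      _ ≤ max Cardinal.aleph0 (Cardinal.mk ↥s) := by
          apply max_le (le_max_left _ _)
          have : Cardinal.mk (ℚ × ↥s) ≤ Cardinal.aleph0 * Cardinal.mk ↥s := by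
            rw [Cardinal.mk_prod]
            simp [Cardinal.mk_eq_aleph0]
          refine this.trans ?_
          refine (Cardinal.mul_le_max _ _).trans ?_
          simp [max_assoc, max_comm, max_left_comm]
  · -- T is an AddSubmonoid-closed set; closure contains the span
    have hTadd : ∀ x ∈ Set.range F, ∀ y ∈ Set.range F, x + y ∈ Set.range F := by
      rintro _ ⟨l₁, rfl⟩ _ ⟨l₂, rfl⟩
      exact ⟨l₁ ++ l₂, by simp [hF]⟩
    have hTqsmul : ∀ (q : ℚ), ∀ x ∈ Set.range F, (q : ℝ) • x ∈ Set.range F := by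
      rintro q _ ⟨l, rfl⟩
      refine ⟨l.map fun p => (q * p.1, p.2), ?_⟩
      simp only [hF, List.map_map, List.smul_sum]
      congr 1
      ext p
      simp [Function.comp, smul_smul]
    intro x hx
    refine Submodule.span_induction (p := fun x _ => x ∈ closure (Set.range F))
      ?_ ?_ ?_ ?_ hx
    · intro f hf
      apply subset_closure
      exact ⟨[(1, ⟨f, hf⟩)], by simp [hF]⟩
    · exact subset_closure ⟨[], by simp [hF]⟩
    · intro a b _ _ ha hb
      obtain ⟨u, hu, hul⟩ := mem_closure_iff_seq_limit.mp ha
      obtain ⟨w, hw, hwl⟩ := mem_closure_iff_seq_limit.mp hb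
      exact mem_closure_iff_seq_limit.mpr ⟨fun n => u n + w n,
        fun n => hTadd _ (hu n) _ (hw n), hul.add hwl⟩
    · intro c a _ ha
      obtain ⟨u, hu, hul⟩ := mem_closure_iff_seq_limit.mp ha
      have hc : (c : ℝ) ∈ closure (Set.range (Rat.cast : ℚ → ℝ)) := by
        rw [Rat.denseRange_cast.closure_eq]; trivial
      obtain ⟨q0, hq0, hq0l⟩ := mem_closure_iff_seq_limit.mp hc
      choose q hq using hq0
      have hql : Filter.Tendsto (fun n => ((q n : ℚ) : ℝ)) Filter.atTop (nhds c) := by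
        convert hq0l using 1
        ext n
        exact (hq n)
      refine mem_closure_iff_seq_limit.mpr ⟨fun n => ((q n : ℚ) : ℝ) • u n,
        fun n => hTqsmul _ _ (hu n), ?_⟩
      exact hql.smul hul

lemma densChar_closedSpan_le (s : Set E) :
    densChar ↥((Submodule.span ℝ s).topologicalClosure) ≤
      max Cardinal.aleph0 (Cardinal.mk ↥s) := by
  obtain ⟨T, hTsub, hTcard, hTdense⟩ := exists_dense_rational s
  set V := (Submodule.span ℝ s).topologicalClosure with hV
  have hTV : T ⊆ (V : Set E) := hTsub.trans (Submodule.le_topologicalClosure _)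
  set P : Set ↥V := (Subtype.val) ⁻¹' T with hP
  have hPdense : Dense P := by
    intro v
    rw [Metric.mem_closure_iff]
    intro r hr
    have hv : (v : E) ∈ closure (Submodule.span ℝ s : Set E) := v.2
    have hv2 : (v : E) ∈ closure T := by
      refine closure_minimal hTdense isClosed_closure hv
    obtain ⟨t, htT, htd⟩ := Metric.mem_closure_iff.mp hv2 r hr
    exact ⟨⟨t, hTV htT⟩, htT, by rwa [Subtype.dist_eq]⟩
  calc densChar ↥V ≤ Cardinal.mk ↥P := densChar_le_mk_of_dense hPdense
    _ ≤ Cardinal.mk ↥T := Cardinal.mk_preimage_of_injective _ _ Subtype.val_injective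
    _ ≤ _ := hTcard

end Span

section Funct
variable {E : Type u} [NormedAddCommGroup E] [NormedSpace ℝ E]

lemma exists_near_norming (ψ : E →L[ℝ] ℝ) (hψ : ‖ψ‖ = 1) {θ : ℝ} (h0 : 0 < θ) (h1 : θ ≤ 1) :
    ∃ x : E, ‖x‖ = 1 ∧ 1 - θ < ψ x := by
  by_contra hcon
  push_neg at hcon
  have hb : ∀ x : E, ‖ψ x‖ ≤ (1 - θ) * ‖x‖ := by
    intro x
    rcases eq_or_ne x 0 with rfl | hx
    · simp
    · have hnx : (0:ℝ) < ‖x‖ := norm_pos_iff.mpr hx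
      have hu : ∀ (c : ℝ), |c| = 1 → ψ ((c / ‖x‖) • x) ≤ 1 - θ := by
        intro c hc
        apply hcon
        rw [norm_smul, Real.norm_eq_abs, abs_div, hc, abs_of_pos hnx]
        field_simp
      have h1' := hu 1 (by norm_num)
      have h2' := hu (-1) (by norm_num)
      rw [map_smul] at h1' h2'
      simp only [smul_eq_mul] at h1' h2'
      have e1 : (1/‖x‖ * ψ x) * ‖x‖ = ψ x := by field_simp
      have e2 : (-1/‖x‖ * ψ x) * ‖x‖ = -ψ x := by field_simp
      have g1 := mul_le_mul_of_nonneg_right h1' hnx.le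
      have g2 := mul_le_mul_of_nonneg_right h2' hnx.le
      rw [e1] at g1
      rw [e2] at g2
      rw [Real.norm_eq_abs, abs_le']
      constructor
      · linarith
      · linarith
  have := ContinuousLinearMap.opNorm_le_bound ψ (by linarith) hb
  rw [hψ] at this
  linarith

lemma exists_killing {V : Submodule ℝ E} (hc : IsClosed (V : Set E)) {x₀ : E} (h : x₀ ∉ V) :
    ∃ ψ : E →L[ℝ] ℝ, ‖ψ‖ = 1 ∧ ∀ v ∈ V, ψ v = 0 := by
  obtain ⟨f, u, hf, hfx⟩ := geometric_hahn_banach_closed_point V.convex hc h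
  have hu : (0:ℝ) < u := by simpa using hf 0 V.zero_mem
  have hker : ∀ v ∈ V, f v = 0 := by
    intro v hv
    by_contra hfv
    have h2 : f (((u + 1) / f v) • v) < u := hf _ (V.smul_mem _ hv)
    rw [map_smul, smul_eq_mul] at h2
    rw [div_mul_cancel₀ _ hfv] at h2
    linarith
  have hf0 : f ≠ 0 := by
    intro h0
    rw [h0] at hfx
    simp at hfx
    linarith
  have hnf : ‖f‖ ≠ 0 := by simpa [norm_ne_zero_iff] using hf0
  refine ⟨‖f‖⁻¹ • f, ?_, ?_⟩
  · rw [norm_smul (α := ℝ) (‖f‖⁻¹) f, norm_inv, norm_norm]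
    field_simp
  · intro v hv
    simp [hker v hv]

end Funct

section Mod
variable {X : Type u} [NormedAddCommGroup X] [NormedSpace ℝ X]

lemma convexityModulus_nonneg (η : ℝ) : 0 ≤ convexityModulus X η := by
  apply Real.sInf_nonneg
  rintro d ⟨x, y, hx, hy, _, rfl⟩
  have := norm_add_le x y
  nlinarith

lemma convexityModulus_le {η : ℝ} {a b : X} (ha : ‖a‖ ≤ 1) (hb : ‖b‖ ≤ 1)
    (hab : η ≤ ‖a - b‖) : convexityModulus X η ≤ 1 - ‖a + b‖ / 2 := by
  apply csInf_le
  · refine ⟨0, ?_⟩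
    rintro d ⟨x, y, hx, hy, _, rfl⟩
    have := norm_add_le x y
    nlinarith
  · exact ⟨a, b, ha, hb, hab, rfl⟩

lemma convexityModulus_le_one {η : ℝ} (hη : η ≤ 2) {u : X} (hu : ‖u‖ = 1) :
    convexityModulus X η ≤ 1 := by
  have hd : η ≤ ‖u - -u‖ := by
    rw [sub_neg_eq_add, show u + u = (2:ℝ) • u from (two_smul ℝ u).symm, norm_smul, hu]
    simp only [Real.norm_ofNat, mul_one]
    exact hη
  have h := convexityModulus_le (η := η) (a := u) (b := -u) (le_of_eq hu)
    (by rw [norm_neg, hu]) hd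
  rw [add_neg_cancel, norm_zero] at h
  simpa using h

lemma tangentialModulus_nonneg (t : ℝ) : 0 ≤ tangentialModulus X t := by
  apply Real.sInf_nonneg
  rintro d ⟨x, v, hx, hv, horth, rfl⟩
  have := horth t
  rw [hx] at this
  linarith

lemma tangentialModulus_bddBelow (t : ℝ) : BddBelow {d : ℝ | ∃ x v : X, ‖x‖ = 1 ∧ ‖v‖ = 1 ∧
    (∀ lam : ℝ, ‖x‖ ≤ ‖x + lam • v‖) ∧ d = ‖x + t • v‖ - 1} := by
  refine ⟨0, ?_⟩
  rintro d ⟨x, v, hx, hv, horth, rfl⟩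
  have := horth t
  rw [hx] at this
  linarith

lemma tangentialModulus_le {t : ℝ} {x v : X} (hx : ‖x‖ = 1) (hv : ‖v‖ = 1)
    (horth : ∀ lam : ℝ, ‖x‖ ≤ ‖x + lam • v‖) :
    tangentialModulus X t ≤ ‖x + t • v‖ - 1 :=
  csInf_le (tangentialModulus_bddBelow t) ⟨x, v, hx, hv, horth, rfl⟩

lemma tangentialModulus_lip {a b : ℝ} {x v : X} (hx : ‖x‖ = 1) (hv : ‖v‖ = 1)
    (horth : ∀ lam : ℝ, ‖x‖ ≤ ‖x + lam • v‖) :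
    tangentialModulus X a ≤ tangentialModulus X b + |a - b| := by
  rw [← sub_le_iff_le_add]
  have hne : Set.Nonempty {d : ℝ | ∃ x v : X, ‖x‖ = 1 ∧ ‖v‖ = 1 ∧
      (∀ lam : ℝ, ‖x‖ ≤ ‖x + lam • v‖) ∧ d = ‖x + b • v‖ - 1} :=
    ⟨‖x + b • v‖ - 1, ⟨x, v, hx, hv, horth, rfl⟩⟩
  apply le_csInf hne
  rintro d ⟨y, w, hy, hw, horthw, rfl⟩
  have h1 : tangentialModulus X a ≤ ‖y + a • w‖ - 1 := tangentialModulus_le hy hw horthw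
  have h2 : ‖y + a • w‖ ≤ ‖y + b • w‖ + |a - b| := by
    have : y + a • w = (y + b • w) + (a - b) • w := by
      rw [sub_smul]; abel
    rw [this]
    refine (norm_add_le _ _).trans ?_
    rw [norm_smul, hw, Real.norm_eq_abs]
    simp
  linarith

end Mod

section Smooth
variable {X : Type u} [NormedAddCommGroup X] [NormedSpace ℝ X]

lemma exists_near_norming' (g : X →L[ℝ] ℝ) {θ : ℝ} (hθ : 0 < θ) :
    ∃ a : X, ‖a‖ ≤ 1 ∧ ‖g‖ - θ < g a := by
  rcases lt_or_ge (‖g‖ - θ) 0 with h | h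
  · exact ⟨0, by simp, by simpa using h⟩
  · have hg : (0:ℝ) < ‖g‖ := by linarith
    have hgne : g ≠ 0 := by
      intro h0; rw [h0] at hg; simp at hg
    set θ' := min (θ / ‖g‖) 1 with hθ'
    have hθ'0 : 0 < θ' := lt_min (div_pos hθ hg) one_pos
    have hθ'1 : θ' ≤ 1 := min_le_right _ _
    have hgn : ‖‖g‖⁻¹ • g‖ = 1 := by
      rw [norm_smul (α := ℝ) (‖g‖⁻¹) g, norm_inv, norm_norm]
      field_simp
    obtain ⟨x, hx1, hx2⟩ := exists_near_norming (‖g‖⁻¹ • g) hgn hθ'0 hθ'1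
    refine ⟨x, le_of_eq hx1, ?_⟩
    have hx2' : (1 - θ') * ‖g‖ < g x := by
      have : (‖g‖⁻¹ • g) x = ‖g‖⁻¹ * g x := rfl
      rw [this] at hx2
      have := mul_lt_mul_of_pos_right hx2 hg
      calc (1 - θ') * ‖g‖ < ‖g‖⁻¹ * g x * ‖g‖ := this
        _ = g x := by field_simp
    have : ‖g‖ - θ ≤ (1 - θ') * ‖g‖ := by
      have h1 : θ' * ‖g‖ ≤ θ := by
        rw [hθ']
        calc min (θ / ‖g‖) 1 * ‖g‖ ≤ (θ / ‖g‖) * ‖g‖ :=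
              mul_le_mul_of_nonneg_right (min_le_left _ _) hg.le
          _ = θ := by field_simp
      nlinarith
    linarith

lemma dual_smooth {η₁ : ℝ} (hη : 0 ≤ η₁) (ψ f : X →L[ℝ] ℝ) (hψ : ‖ψ‖ ≤ 1) (hf : ‖f‖ ≤ 1) :
    ‖ψ + (convexityModulus X η₁) • f‖ + ‖ψ - (convexityModulus X η₁) • f‖ ≤
      2 + (convexityModulus X η₁) * η₁ := by
  set t := convexityModulus X η₁ with ht
  have ht0 : 0 ≤ t := convexityModulus_nonneg η₁
  apply _root_.le_of_forall_pos_le_add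
  intro θ hθ
  obtain ⟨a, ha, hga⟩ := exists_near_norming' (ψ + t • f) (half_pos hθ)
  obtain ⟨b, hb, hgb⟩ := exists_near_norming' (ψ - t • f) (half_pos hθ)
  have hval : (ψ + t • f) a + (ψ - t • f) b = ψ (a + b) + t * (f (a - b)) := by
    simp only [ContinuousLinearMap.add_apply, ContinuousLinearMap.sub_apply,
      ContinuousLinearMap.smul_apply, map_add, map_sub, smul_eq_mul]
    ring
  have hψab : ψ (a + b) ≤ ‖a + b‖ := by
    calc ψ (a + b) ≤ |ψ (a + b)| := le_abs_self _
      _ = ‖ψ (a + b)‖ := (Real.norm_eq_abs _).symm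
      _ ≤ ‖ψ‖ * ‖a + b‖ := ψ.le_opNorm _
      _ ≤ ‖a + b‖ := by nlinarith [norm_nonneg (a + b)]
  have hfab : f (a - b) ≤ ‖a - b‖ := by
    calc f (a - b) ≤ |f (a - b)| := le_abs_self _
      _ = ‖f (a - b)‖ := (Real.norm_eq_abs _).symm
      _ ≤ ‖f‖ * ‖a - b‖ := f.le_opNorm _
      _ ≤ ‖a - b‖ := by nlinarith [norm_nonneg (a - b)]
  have hsum : ‖ψ + t • f‖ + ‖ψ - t • f‖ < ψ (a + b) + t * (f (a - b)) + θ := by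
    rw [← hval]; linarith
  rcases le_or_gt ‖a - b‖ η₁ with hcase | hcase
  · have h1 : ‖a + b‖ ≤ 2 := (norm_add_le a b).trans (by linarith)
    have h2 : t * f (a - b) ≤ t * η₁ := by
      apply mul_le_mul_of_nonneg_left (hfab.trans hcase) ht0
    linarith
  · have h1 : t ≤ 1 - ‖a + b‖ / 2 := convexityModulus_le ha hb hcase.le
    have h2 : ‖a - b‖ ≤ 2 := by
      have := norm_sub_le a b; linarith
    have h3 : t * f (a - b) ≤ t * 2 :=
      mul_le_mul_of_nonneg_left (hfab.trans h2) ht0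
    have h4 : 0 ≤ t * η₁ := mul_nonneg ht0 hη
    linarith

set_option maxHeartbeats 1000000 in
lemma key_orth (huc : ∀ ε : ℝ, 0 < ε → ε ≤ 2 → 0 < convexityModulus X ε)
    (S : Set (X →L[ℝ] ℝ)) (hS : ∀ f ∈ S, ‖f‖ = 1)
    (hcard : max Cardinal.aleph0 (Cardinal.mk ↥S) < densChar X)
    {η₁ : ℝ} (hη0 : 0 < η₁) (hη2 : η₁ ≤ 2) {u : X} (hu : ‖u‖ = 1) :
    ∃ x : X, ‖x‖ = 1 ∧ ∀ f ∈ S, |f x| ≤ 2 * η₁ := by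
  classical
  set t := convexityModulus X η₁ with htdef
  have ht0 : 0 < t := huc η₁ hη0 hη2
  have ht1 : t ≤ 1 := convexityModulus_le_one hη2 hu
  set V := (Submodule.span ℝ S).topologicalClosure with hVdef
  obtain ⟨T, hTsub, hTcard, hTdense⟩ := exists_dense_rational S
  -- V is a proper subspace
  have hψ0 : ∃ ψ0 : X →L[ℝ] ℝ, ψ0 ∉ V := by
    by_contra hcon
    push_neg at hcon
    have hTd : Dense T := by
      intro g
      have hg : g ∈ (V : Set (X →L[ℝ] ℝ)) := hcon g
      have h1 : (Submodule.span ℝ S : Set (X →L[ℝ] ℝ)) ⊆ closure T := hTdense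
      have h2 : (V : Set (X →L[ℝ] ℝ)) ⊆ closure T := by
        rw [hVdef, Submodule.topologicalClosure_coe]
        calc closure (Submodule.span ℝ S : Set (X →L[ℝ] ℝ)) ⊆ closure (closure T) :=
              closure_mono h1
          _ = closure T := closure_closure
      exact h2 hg
    have hwit : ∀ g : X →L[ℝ] ℝ, ∃ a : X, ‖a‖ ≤ 1 ∧ (g ≠ 0 → ‖g‖ / 2 < g a) := by
      intro g
      rcases eq_or_ne g 0 with rfl | hg
      · exact ⟨0, by simp, by simp⟩
      · have hgpos : (0:ℝ) < ‖g‖ := norm_pos_iff.mpr hg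
        obtain ⟨a, ha1, ha2⟩ := exists_near_norming' g (θ := ‖g‖ / 2) (by linarith)
        exact ⟨a, ha1, fun _ => by linarith⟩
    choose w hw1 hw2 using hwit
    set Y := (Submodule.span ℝ (w '' T)).topologicalClosure with hYdef
    have hYcard : densChar ↥Y < densChar X := by
      refine lt_of_le_of_lt (densChar_closedSpan_le _) ?_
      refine lt_of_le_of_lt ?_ hcard
      apply max_le (le_max_left _ _)
      refine le_trans (le_trans Cardinal.mk_image_le hTcard) ?_
      exact max_le (le_max_left _ _) (le_max_right _ _)
    have hY : ∃ x1 : X, x1 ∉ Y := by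
      by_contra hY2
      push_neg at hY2
      have hdense : Dense (Y : Set X) := by
        rw [Set.eq_univ_of_forall hY2]
        exact dense_univ
      exact absurd (densChar_le_of_dense_submodule hdense) (not_le.mpr hYcard)
    obtain ⟨x1, hx1⟩ := hY
    obtain ⟨ψ1, hψ1n, hψ1k⟩ := exists_killing (Submodule.isClosed_topologicalClosure _) hx1
    have hmem : ψ1 ∈ closure T := hTd ψ1
    obtain ⟨g, hgT, hgd⟩ := Metric.mem_closure_iff.mp hmem (1/4) (by norm_num)
    rw [dist_eq_norm] at hgd
    have hgn : (3:ℝ)/4 ≤ ‖g‖ := by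
      have h := norm_sub_norm_le ψ1 g
      rw [hψ1n] at h
      linarith
    have hg0 : g ≠ 0 := by
      intro h0; rw [h0, norm_zero] at hgn; linarith
    have hwY : w g ∈ Y := by
      apply Submodule.le_topologicalClosure
      exact Submodule.subset_span ⟨g, hgT, rfl⟩
    have hψw : ψ1 (w g) = 0 := hψ1k _ hwY
    have hgw : ‖g‖ / 2 < g (w g) := hw2 g hg0
    have habs : |(ψ1 - g) (w g)| ≤ ‖ψ1 - g‖ := by
      calc |(ψ1 - g) (w g)| = ‖(ψ1 - g) (w g)‖ := (Real.norm_eq_abs _).symm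
        _ ≤ ‖ψ1 - g‖ * ‖w g‖ := (ψ1 - g).le_opNorm _
        _ ≤ ‖ψ1 - g‖ * 1 := by
            apply mul_le_mul_of_nonneg_left (hw1 g) (norm_nonneg _)
        _ = ‖ψ1 - g‖ := mul_one _
    have : (ψ1 - g) (w g) = -(g (w g)) := by
      simp [ContinuousLinearMap.sub_apply, hψw]
    rw [this, abs_neg] at habs
    have : g (w g) ≤ |g (w g)| := le_abs_self _
    linarith
  -- Riesz in the dual
  set δ := t * η₁ / 4 with hδdef
  have hδ0 : 0 < δ := by positivity
  have hδhalf : δ ≤ 1/2 := by nlinarith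
  obtain ⟨ψ1, hψ1nV, hψ1d⟩ := riesz_lemma (F := V)
    (Submodule.isClosed_topologicalClosure _) hψ0 (r := 1 - δ) (by linarith)
  have hψ1ne : ψ1 ≠ 0 := by
    intro h0; rw [h0] at hψ1nV; exact hψ1nV V.zero_mem
  have hψ1pos : (0:ℝ) < ‖ψ1‖ := norm_pos_iff.mpr hψ1ne
  set ψ := ‖ψ1‖⁻¹ • ψ1 with hψdef
  have hψn : ‖ψ‖ = 1 := by
    rw [hψdef, norm_smul (α := ℝ) (‖ψ1‖⁻¹) ψ1, norm_inv, norm_norm]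
    field_simp
  have hRiesz : ∀ v, v ∈ V → 1 - δ ≤ ‖ψ - v‖ := by
    intro v hv
    have h := hψ1d (‖ψ1‖ • v) (V.smul_mem _ hv)
    have heq : ψ - v = ‖ψ1‖⁻¹ • (ψ1 - ‖ψ1‖ • v) := by
      rw [smul_sub, smul_smul, inv_mul_cancel₀ hψ1pos.ne', one_smul]
    calc 1 - δ = ‖ψ1‖⁻¹ * ((1 - δ) * ‖ψ1‖) := by field_simp
      _ ≤ ‖ψ1‖⁻¹ * ‖ψ1 - ‖ψ1‖ • v‖ :=
          mul_le_mul_of_nonneg_left h (inv_nonneg.mpr (norm_nonneg _))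
      _ = ‖ψ - v‖ := by
          rw [heq, norm_smul (α := ℝ) (‖ψ1‖⁻¹) (ψ1 - ‖ψ1‖ • v), norm_inv, norm_norm]
  obtain ⟨x₀, hx0n, hx0ψ⟩ := exists_near_norming ψ hψn hδ0 (hδhalf.trans (by norm_num))
  refine ⟨x₀, hx0n, ?_⟩
  intro f hf
  have hfV : f ∈ V := Submodule.le_topologicalClosure _ (Submodule.subset_span hf)
  have hfn := hS f hf
  have hs := dual_smooth hη0.le ψ f hψn.le hfn.le
  have happ : ∀ g : X →L[ℝ] ℝ, g x₀ ≤ ‖g‖ := by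
    intro g
    calc g x₀ ≤ |g x₀| := le_abs_self _
      _ = ‖g x₀‖ := (Real.norm_eq_abs _).symm
      _ ≤ ‖g‖ * ‖x₀‖ := g.le_opNorm _
      _ = ‖g‖ := by rw [hx0n, mul_one]
  have hA : ψ x₀ + t * f x₀ ≤ ‖ψ + t • f‖ := by
    have := happ (ψ + t • f)
    simpa [ContinuousLinearMap.add_apply, ContinuousLinearMap.smul_apply,
      smul_eq_mul] using this
  have hA' : ψ x₀ - t * f x₀ ≤ ‖ψ - t • f‖ := by
    have := happ (ψ - t • f)
    simpa [ContinuousLinearMap.sub_apply, ContinuousLinearMap.smul_apply,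
      smul_eq_mul] using this
  have hB : 1 - δ ≤ ‖ψ - t • f‖ := hRiesz _ (V.smul_mem t hfV)
  have hB' : 1 - δ ≤ ‖ψ + t • f‖ := by
    have := hRiesz (-(t • f)) (V.neg_mem (V.smul_mem t hfV))
    rwa [sub_neg_eq_add] at this
  have hψx : 1 - δ < ψ x₀ := hx0ψ
  have hq : 0 < t * η₁ := mul_pos ht0 hη0
  have h5 : t * f x₀ < t * (2 * η₁) := by nlinarith [hA, hB, hs, hψx, hq]
  have h6 : -(t * f x₀) < t * (2 * η₁) := by nlinarith [hA', hB', hs, hψx, hq]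
  have g1 : f x₀ < 2 * η₁ := by
    have := (mul_lt_mul_iff_right₀ ht0).mp h5
    linarith
  have g2 : -(2 * η₁) < f x₀ := by
    have h7 : t * (-(f x₀)) < t * (2 * η₁) := by linarith
    have := (mul_lt_mul_iff_right₀ ht0).mp h7
    linarith
  rw [abs_le]
  exact ⟨g2.le, g1.le⟩

set_option maxHeartbeats 1600000

/-- Every uniformly convex normed space `X` of density character `κ`
is `(<κ)-φ_X`-octahedral, where `φ_X` is the tangential modulus of convexity of `X`. -/
theorem phiOctahedral_of_uniformlyConvex {X : Type u} [NormedAddCommGroup X]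
    [NormedSpace ℝ X] (huc : ∀ ε : ℝ, 0 < ε → ε ≤ 2 → 0 < convexityModulus X ε)
    (κ : Cardinal.{u}) (hdens : densChar X = κ) :
    PhiOctahedral κ (tangentialModulus X) X := by
  classical
  subst hdens
  intro ε hε Z _hZc hZdens
  -- a unit vector in X
  have hXne : ∃ u : X, ‖u‖ = 1 := by
    have hv : ∃ v : X, v ≠ 0 := by
      by_contra hno
      push_neg at hno
      have h1 : densChar X ≤ 1 := by
        have hd : Dense ({0} : Set X) := by
          have : (univ : Set X) = {0} := by
            apply Set.eq_singleton_iff_unique_mem.mpr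
            exact ⟨trivial, fun x _ => hno x⟩
          rw [dense_iff_closure_eq, ← this, closure_univ]
        calc densChar X ≤ Cardinal.mk ↥({0} : Set X) := densChar_le_mk_of_dense hd
          _ = 1 := by simp
      have h2 : (1 : Cardinal.{u}) ≤ densChar ↥Z := by
        obtain ⟨s, hs, hcard⟩ := densChar_exists_dense ↥Z
        rw [← hcard, Cardinal.one_le_iff_ne_zero, Cardinal.mk_ne_zero_iff]
        exact Set.Nonempty.to_subtype (hs.nonempty)
      exact absurd hZdens (not_lt.mpr (h1.trans h2))
    obtain ⟨v, hv⟩ := hv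
    refine ⟨‖v‖⁻¹ • v, ?_⟩
    rw [norm_smul, norm_inv, norm_norm]
    exact inv_mul_cancel₀ (norm_ne_zero_iff.mpr hv)
  obtain ⟨u, hu⟩ := hXne
  by_cases hZ0 : ∃ z0 : X, z0 ∈ Z ∧ z0 ≠ 0
  swap
  · push_neg at hZ0
    refine ⟨u, hu, fun z hz h1 lam => ?_⟩
    exact absurd (hZ0 z hz) (by intro h0; rw [h0, norm_zero] at h1; norm_num at h1)
  obtain ⟨z0, hz0m, hz0ne⟩ := hZ0
  -- wlog small ε
  set ε' := min ε (1/2) with hε'def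
  have hε'0 : 0 < ε' := lt_min hε (by norm_num)
  have hε'h : ε' ≤ 1/2 := min_le_right _ _
  have hε'ε : ε' ≤ ε := min_le_left _ _
  -- density of Z is infinite
  have hℵZ : Cardinal.aleph0 ≤ densChar ↥Z := by
    apply aleph0_le_densChar (v := (⟨z0, hz0m⟩ : ↥Z))
    intro h0
    exact hz0ne (by simpa using congrArg (Subtype.val) h0)
  have hℵX : Cardinal.aleph0 < densChar X := lt_of_le_of_lt hℵZ hZdens
  -- dense subset and norming functionals
  obtain ⟨D, hD, hDcard⟩ := densChar_exists_dense ↥Z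
  have hfd : ∀ d : ↥D, ∃ g : X →L[ℝ] ℝ, ‖g‖ = 1 ∧
      ((((d : ↥Z) : X)) ≠ 0 → g (((d : ↥Z) : X)) = ‖(((d : ↥Z) : X))‖) := by
    intro d
    by_cases h : (((d : ↥Z) : X)) = 0
    · obtain ⟨g, hg1, hg2⟩ := exists_dual_vector ℝ u (by
        intro h0; rw [h0] at hu; norm_num at hu)
      exact ⟨g, hg1, fun hc => absurd h hc⟩
    · obtain ⟨g, hg1, hg2⟩ := exists_dual_vector ℝ _ (norm_ne_zero_iff.mpr h)
      exact ⟨g, hg1, fun _ => hg2⟩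
  choose F hF1 hF2 using hfd
  set S := Set.range F with hSdef
  have hScard : max Cardinal.aleph0 (Cardinal.mk ↥S) < densChar X := by
    apply max_lt hℵX
    calc Cardinal.mk ↥S ≤ Cardinal.mk ↥D := Cardinal.mk_range_le
      _ = densChar ↥Z := hDcard
      _ < densChar X := hZdens
  -- constants
  set τ := ε'/8 with hτdef
  have hτ0 : 0 < τ := by positivity
  have hcmτ : 0 < convexityModulus X τ := huc τ hτ0 (by rw [hτdef]; linarith)
  set η' := min (ε'^2/32) (min (convexityModulus X τ/4) (1/8)) with hη'def
  have hη'0 : 0 < η' := by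
    apply lt_min (by positivity) (lt_min (by positivity) (by norm_num))
  have hη'a : η' ≤ ε'^2/32 := min_le_left _ _
  have hη'b : η' ≤ convexityModulus X τ/4 := (min_le_right _ _).trans (min_le_left _ _)
  have hη'c : η' ≤ 1/8 := (min_le_right _ _).trans (min_le_right _ _)
  -- find x₀
  obtain ⟨x₀, hx₀, hx₀S⟩ := key_orth huc S
    (by rintro f ⟨d, rfl⟩; exact hF1 d) hScard
    (η₁ := η'/2) (by positivity) (by linarith) hu
  have hx₀S' : ∀ f ∈ S, |f x₀| ≤ η' := by
    intro f hf
    have := hx₀S f hf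
    linarith
  refine ⟨x₀, hx₀, ?_⟩
  intro z hzZ hz1 lam
  -- approximate orthogonality of Z to x₀
  have horth : ∀ s : ℝ, 1 - |s| * η' ≤ ‖z + s • x₀‖ := by
    intro s
    apply _root_.le_of_forall_pos_le_add
    intro θ hθ
    set θ' := min (θ/2) (1/4) with hθ'def
    have hθ'0 : 0 < θ' := lt_min (by linarith) (by norm_num)
    have hθ'a : θ' ≤ θ/2 := min_le_left _ _
    have hθ'b : θ' ≤ 1/4 := min_le_right _ _
    have hzc : (⟨z, hzZ⟩ : ↥Z) ∈ closure D := hD _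
    obtain ⟨d, hdD, hdist⟩ := Metric.mem_closure_iff.mp hzc θ' hθ'0
    rw [Subtype.dist_eq, dist_eq_norm] at hdist
    have hdn : 1 - θ' ≤ ‖((d : ↥Z) : X)‖ := by
      have h := norm_sub_norm_le z ((d : ↥Z) : X)
      rw [hz1] at h
      linarith
    have hdne : ((d : ↥Z) : X) ≠ 0 := by
      intro h0
      rw [h0, norm_zero] at hdn
      linarith
    set dd : ↥D := ⟨d, hdD⟩ with hdddef
    have hf1 := hF1 dd
    have hf2 := hF2 dd hdne
    have hfx : |F dd x₀| ≤ η' := hx₀S' _ ⟨dd, rfl⟩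
    have hlow : ‖((d : ↥Z) : X)‖ - |s| * η' ≤ ‖((d : ↥Z) : X) + s • x₀‖ := by
      have happly : F dd (((d : ↥Z) : X) + s • x₀) = ‖((d : ↥Z) : X)‖ + s * F dd x₀ := by
        rw [map_add, map_smul, smul_eq_mul, hf2]
      have hbound : F dd (((d : ↥Z) : X) + s • x₀) ≤ ‖((d : ↥Z) : X) + s • x₀‖ := by
        calc F dd (((d : ↥Z) : X) + s • x₀) ≤ |F dd (((d : ↥Z) : X) + s • x₀)| := le_abs_self _
          _ = ‖F dd (((d : ↥Z) : X) + s • x₀)‖ := (Real.norm_eq_abs _).symm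
          _ ≤ ‖F dd‖ * ‖((d : ↥Z) : X) + s • x₀‖ := (F dd).le_opNorm _
          _ = ‖((d : ↥Z) : X) + s • x₀‖ := by rw [hf1, one_mul]
      have hsmul : -( |s| * η') ≤ s * F dd x₀ := by
        have h1 : |s * F dd x₀| ≤ |s| * η' := by
          rw [abs_mul]
          exact mul_le_mul_of_nonneg_left hfx (abs_nonneg s)
        have := neg_abs_le (s * F dd x₀)
        linarith [abs_le.mp h1]
      linarith [happly ▸ hbound]
    have htri : ‖((d : ↥Z) : X) + s • x₀‖ ≤ ‖z + s • x₀‖ + θ' := by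
      have : ((d : ↥Z) : X) + s • x₀ = (z + s • x₀) + (((d : ↥Z) : X) - z) := by abel
      rw [this]
      refine (norm_add_le _ _).trans ?_
      have : ‖((d : ↥Z) : X) - z‖ = ‖z - ((d : ↥Z) : X)‖ := norm_sub_rev _ _
      rw [this]
      linarith
    linarith
  -- minimize over a compact interval
  have hcont : ContinuousOn (fun s : ℝ => ‖z + s • x₀‖) (Icc (-3) 3) := by
    apply Continuous.continuousOn
    exact (continuous_const.add (continuous_id.smul continuous_const)).norm
  obtain ⟨t₀, ht₀mem, ht₀min⟩ := isCompact_Icc.exists_isMinOn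
    ⟨0, by norm_num⟩ hcont
  set m := ‖z + t₀ • x₀‖ with hmdef
  have hmin : ∀ s : ℝ, s ∈ Icc (-3:ℝ) 3 → m ≤ ‖z + s • x₀‖ := fun s hs => ht₀min hs
  have hm1 : m ≤ 1 := by
    have := hmin 0 (by norm_num)
    simpa [hz1] using this
  have hnormlow : ∀ s : ℝ, |s| - 1 ≤ ‖z + s • x₀‖ := by
    intro s
    have h := norm_sub_norm_le (s • x₀) (-z)
    rw [sub_neg_eq_add, norm_neg, hz1, norm_smul, hx₀, mul_one, Real.norm_eq_abs] at h
    calc |s| - 1 ≤ ‖s • x₀ + z‖ := h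
      _ = ‖z + s • x₀‖ := by rw [add_comm]
  have hglobal : ∀ s : ℝ, m ≤ ‖z + s • x₀‖ := by
    intro s
    by_cases hs : s ∈ Icc (-3:ℝ) 3
    · exact hmin s hs
    · have habs : 3 < |s| := by
        rw [Set.mem_Icc, not_and_or, not_le, not_le] at hs
        rcases hs with h | h
        · rw [abs_of_neg (by linarith)]; linarith
        · rw [abs_of_pos (by linarith)]; linarith
      linarith [hnormlow s]
  have hmlow : 1 - |t₀| * η' ≤ m := horth t₀
  have habs_t₀ : |t₀| ≤ 2 := by
    have := hnormlow t₀
    rw [← hmdef] at this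
    linarith
  have hm2 : 1 - 2 * η' ≤ m := by nlinarith [mul_le_mul_of_nonneg_right habs_t₀ hη'0.le]
  have hm34 : 3/4 ≤ m := by linarith
  have hm0 : 0 < m := by linarith
  -- |t₀| is small by uniform convexity
  have ht₀small : |t₀| < τ := by
    by_contra hcon
    push_neg at hcon
    have hmid : 1 - |t₀/2| * η' ≤ ‖z + (t₀/2) • x₀‖ := horth _
    have hcm := convexityModulus_le (η := τ) (a := z) (b := z + t₀ • x₀)
      (le_of_eq hz1) hm1 (by
        rw [show z - (z + t₀ • x₀) = -(t₀ • x₀) by abel, norm_neg, norm_smul, hx₀,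
          mul_one, Real.norm_eq_abs]
        exact hcon)
    have heq2 : ‖z + (z + t₀ • x₀)‖ = 2 * ‖z + (t₀/2) • x₀‖ := by
      rw [show z + (z + t₀ • x₀) = (2:ℝ) • (z + (t₀/2) • x₀) by module]
      rw [norm_smul]
      norm_num
    rw [heq2] at hcm
    have habs2 : |t₀/2| ≤ 1 := by rw [abs_div]; simp; linarith [abs_nonneg t₀]
    have h3 : 1 - η' ≤ ‖z + (t₀/2) • x₀‖ := by
      nlinarith [mul_le_mul_of_nonneg_right habs2 hη'0.le]
    nlinarith
  -- the exactly orthogonal pair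
  set z' := z + t₀ • x₀ with hz'def
  have hz'norm : ‖z'‖ = m := by rw [hz'def]
  set xhat := m⁻¹ • z' with hxhatdef
  have hxhat : ‖xhat‖ = 1 := by
    rw [hxhatdef, norm_smul, norm_inv, Real.norm_eq_abs, abs_of_pos hm0, hz'norm,
      inv_mul_cancel₀ hm0.ne']
  have hexp : ∀ l : ℝ, xhat + l • x₀ = m⁻¹ • (z + (t₀ + m * l) • x₀) := by
    intro l
    have hcoef : m⁻¹ * (t₀ + m * l) = m⁻¹ * t₀ + l := by
      rw [mul_add, ← mul_assoc, inv_mul_cancel₀ hm0.ne', one_mul]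
    calc xhat + l • x₀ = m⁻¹ • z + ((m⁻¹ * t₀) • x₀ + l • x₀) := by
          rw [hxhatdef, hz'def, smul_add, smul_smul, add_assoc]
      _ = m⁻¹ • z + (m⁻¹ * t₀ + l) • x₀ := by rw [add_smul]
      _ = m⁻¹ • z + (m⁻¹ * (t₀ + m * l)) • x₀ := by rw [hcoef]
      _ = m⁻¹ • (z + (t₀ + m * l) • x₀) := by rw [smul_add, smul_smul]
  have hxorth : ∀ l : ℝ, ‖xhat‖ ≤ ‖xhat + l • x₀‖ := by
    intro l
    rw [hxhat, hexp l, norm_smul, norm_inv, Real.norm_eq_abs, abs_of_pos hm0]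
    calc (1:ℝ) = m⁻¹ * m := (inv_mul_cancel₀ hm0.ne').symm
      _ ≤ m⁻¹ * ‖z + (t₀ + m * l) • x₀‖ :=
          mul_le_mul_of_nonneg_left (hglobal _) (inv_nonneg.mpr hm0.le)
  -- facts about the tangential modulus
  have hφpos : 0 ≤ tangentialModulus X |lam| := tangentialModulus_nonneg _
  have hφle : tangentialModulus X |lam| ≤ |lam| := by
    have h1 := tangentialModulus_le (t := |lam|) hxhat hx₀ hxorth
    have h2 : ‖xhat + |lam| • x₀‖ ≤ 1 + |lam| := by
      refine (norm_add_le _ _).trans ?_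
      rw [hxhat, norm_smul, Real.norm_eq_abs, abs_abs, hx₀, mul_one]
    linarith
  have hmono : (1 - ε) * (1 + tangentialModulus X |lam|) ≤
      (1 - ε') * (1 + tangentialModulus X |lam|) := by
    apply mul_le_mul_of_nonneg_right (by linarith) (by linarith)
  rcases le_or_gt |lam| (2/ε') with hlam | hlam
  · -- main case: |lam| ≤ 2/ε'
    set r := (lam - t₀)/m with hrdef
    have hmr : m * r = lam - t₀ := by
      rw [hrdef, mul_div_assoc']
      exact mul_div_cancel_left₀ _ hm0.ne'
    have hexp2 : z + lam • x₀ = m • (xhat + r • x₀) := by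
      rw [smul_add, hxhatdef, smul_smul, mul_inv_cancel₀ hm0.ne', one_smul, hz'def,
        smul_smul, hmr, add_assoc, ← add_smul, show t₀ + (lam - t₀) = lam by ring]
    have hval : ‖z + lam • x₀‖ = m * ‖xhat + r • x₀‖ := by
      rw [hexp2, norm_smul, Real.norm_eq_abs, abs_of_pos hm0]
    have hφr : tangentialModulus X |r| ≤ ‖xhat + r • x₀‖ - 1 := by
      rcases le_or_gt 0 r with hr | hr
      · rw [abs_of_nonneg hr]
        exact tangentialModulus_le (t := r) hxhat hx₀ hxorth
      · rw [abs_of_neg hr]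
        have hneg : ‖(-x₀ : X)‖ = 1 := by rw [norm_neg, hx₀]
        have horthneg : ∀ l : ℝ, ‖xhat‖ ≤ ‖xhat + l • (-x₀ : X)‖ := by
          intro l; rw [smul_neg, ← neg_smul]; exact hxorth (-l)
        have h := tangentialModulus_le (t := -r) hxhat hneg horthneg
        rwa [show (-r) • (-x₀ : X) = r • x₀ by rw [neg_smul, smul_neg, neg_neg]] at h
    have hLip := tangentialModulus_lip (a := |lam|) (b := |r|) hxhat hx₀ hxorth
    have hΔ1 : abs (|lam| - |r|) ≤ |lam - r| := abs_abs_sub_abs_le_abs_sub _ _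
    have hrl : |lam - r| ≤ ε'/3 := by
      have heq3 : lam - r = (lam*(m-1) + t₀)/m := by
        rw [hrdef]
        field_simp
        ring
      rw [heq3, abs_div, abs_of_pos hm0, div_le_iff₀ hm0]
      have h1 : |lam * (m - 1) + t₀| ≤ |lam| * (1 - m) + |t₀| := by
        refine (abs_add_le _ _).trans ?_
        rw [abs_mul, show |m - 1| = 1 - m by rw [abs_of_nonpos (by linarith)]; ring]
      have h2 : |lam| * (1 - m) ≤ (2/ε')*(2*η') := by
        apply mul_le_mul hlam (by linarith) (by linarith) (by positivity)
      have h3 : (2/ε')*(2*η') ≤ ε'/8 := by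
        rw [div_mul_eq_mul_div, div_le_div_iff₀ hε'0 (by norm_num : (0:ℝ) < 8)]
        nlinarith
      have h4 : |t₀| < ε'/8 := by rw [hτdef] at ht₀small; exact ht₀small
      nlinarith [hm34, hε'0]
    have hN : 1 + tangentialModulus X |lam| - ε'/3 ≤ ‖xhat + r • x₀‖ := by
      have h5 : abs (|lam| - |r|) ≤ ε'/3 := hΔ1.trans hrl
      have h6 := abs_le.mp h5
      linarith [hφr, hLip]
    rw [hval]
    refine hmono.trans ?_
    nlinarith [mul_le_mul_of_nonneg_left hN hm0.le, hφpos, hm2, hm1, hη'a, hε'h, hε'0,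
      mul_nonneg (show (0:ℝ) ≤ ε' - 2*η' by nlinarith) hφpos]
  · -- |lam| > 2/ε'
    have h1 := hnormlow lam
    refine hmono.trans ?_
    have h2 : (1-ε')*(1 + tangentialModulus X |lam|) ≤ (1-ε')*(1+|lam|) := by
      apply mul_le_mul_of_nonneg_left (by linarith) (by linarith)
    have h3 : 2 < |lam| * ε' := (div_lt_iff₀ hε'0).mp hlam
    nlinarith
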